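/- Monotonicity of the maximum ratio in the budget: if budgets satisfy P̄^{S+}_t ≤ Q̄^{S+}_t for all t (with export bounds P̄^S_t fixed), then the constrained maximum local generation ratio with budgets P̄^{S+} is less than or equal to that with budgets Q̄^{S+}, i.e., X̄(P̄^{S+}) ≤ X̄(Q̄^{S+}), where X̄(b) = (Σ_t (P^G_t + b_t)) / (Σ_t (P^L_t + max{b_t − P̄^S_t, 0})), provided Σ_t(P^L_t + max{b_t − P̄^S_t,0}) > 0 and the numerator-deficit condition Σ_t P^G_t + Σ_t min{b_t, P̄^S_t} ≤ Σ_t P^L_t holds for the larger budget. -/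

import Mathlib

/-- Monotonicity of the constrained maximum ratio in the capacity budget:
pointwise larger budgets give a (weakly) larger maximum local generation
ratio, under positive denominators and the numerator-deficit condition for the
larger budget. -/
theorem stmt_15 {T : Type*} [Fintype T] [Nonempty T]
    (PG PL PbarS b q : T → ℝ)
    (hPG : ∀ t, 0 ≤ PG t) (hPL : ∀ t, 0 ≤ PL t) (hPbarS : ∀ t, 0 ≤ PbarS t)
    (hb : ∀ t, 0 ≤ b t) (hq : ∀ t, 0 ≤ q t)
    (hL : 0 < ∑ t, PL t)
    (hbq : ∀ t, b t ≤ q t)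
    (hdenb : 0 < ∑ t, (PL t + max (b t - PbarS t) 0))
    (hdenq : 0 < ∑ t, (PL t + max (q t - PbarS t) 0))
    (hdef : ∑ t, PG t + ∑ t, min (q t) (PbarS t) ≤ ∑ t, PL t) :
    (∑ t, (PG t + b t)) / (∑ t, (PL t + max (b t - PbarS t) 0)) ≤
    (∑ t, (PG t + q t)) / (∑ t, (PL t + max (q t - PbarS t) 0)) := by
  have split : ∀ x : T → ℝ, ∑ t, (PG t + x t) =
      (∑ t, PG t + ∑ t, min (x t) (PbarS t)) + ∑ t, max (x t - PbarS t) 0 := by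
    intro x
    rw [add_assoc, ← Finset.sum_add_distrib, ← Finset.sum_add_distrib]
    apply Finset.sum_congr rfl
    intro t _
    rcases le_total (x t) (PbarS t) with h | h
    · rw [min_eq_left h, max_eq_right (by linarith), add_zero]
    · rw [min_eq_right h, max_eq_left (by linarith)]; ring
  have den : ∀ x : T → ℝ, ∑ t, (PL t + max (x t - PbarS t) 0) =
      ∑ t, PL t + ∑ t, max (x t - PbarS t) 0 := fun x => Finset.sum_add_distrib
  set L := ∑ t, PL t with hLdef
  set Mb := ∑ t, PG t + ∑ t, min (b t) (PbarS t) with hMb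
  set Mq := ∑ t, PG t + ∑ t, min (q t) (PbarS t) with hMq
  set Eb := ∑ t, max (b t - PbarS t) 0 with hEb
  set Eq' := ∑ t, max (q t - PbarS t) 0 with hEq
  have hMbq : Mb ≤ Mq := by
    apply add_le_add_right
    apply Finset.sum_le_sum
    intro t _
    exact min_le_min (hbq t) le_rfl
  have hEbq : Eb ≤ Eq' := by
    apply Finset.sum_le_sum
    intro t _
    exact max_le_max (by linarith [hbq t]) le_rfl
  have hEb0 : 0 ≤ Eb := Finset.sum_nonneg fun t _ => le_max_right _ _
  rw [split b, split q]
  rw [den b] at hdenb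
  rw [den q] at hdenq
  rw [den b, den q]
  rw [div_le_div_iff₀ hdenb hdenq]
  nlinarith [mul_le_mul_of_nonneg_right hMbq (le_of_lt hL),
    mul_le_mul_of_nonneg_left hEbq (sub_nonneg.mpr (hMbq.trans hdef)),
    mul_le_mul_of_nonneg_right (sub_le_sub_left hMbq L) hEb0]
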